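/- Let 𝒱 be a small left skew-closed category. On the functor category [𝒱,Set] define (M∗N)C = ∫^B M[B,C] × NB (a coend in Set) and JC = 𝒱(I,C). Define: ℓ_M : M → J∗M with component at C sending m ∈ MC to the class of (j_C, m) ∈ 𝒱(I,[C,C]) × MC; r_M : M∗J → M as the composite of the co-Yoneda isomorphism (M∗J)C = ∫^B M[B,C] × 𝒱(I,B) ≅ M[I,C] with M(i_C); and a : M∗(N∗K) → (M∗N)∗K induced by sending (m,n,k) ∈ M[B,C] × N[E,B] × KE to the class of ((M(L^E_{B,C}))(m), n, k) ∈ M[[E,B],[E,C]] × N[E,B] × KE. Then (∗, J, a, ℓ, r) is a right skew-monoidal structure on [𝒱,Set], and it is closed: each functor M∗- has a right adjoint [M,-] given by [M,K]B = ∫_C [M[B,C], KC] (an end in Set, square brackets denoting function sets). -/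

import Mathlib

open CategoryTheory

universe v u w

/-- A left skew-closed category structure on a category `V` (Street, "Skew-closed categories"). -/
structure SkewClosedStruct (V : Type u) [Category.{v} V] where
  ihom : V → V → V
  imap : ∀ {A A' B B' : V}, (A' ⟶ A) → (B ⟶ B') → (ihom A B ⟶ ihom A' B')
  imap_id : ∀ (A B : V), imap (𝟙 A) (𝟙 B) = 𝟙 (ihom A B)
  imap_comp : ∀ {A A' A'' B B' B'' : V} (f : A' ⟶ A) (f' : A'' ⟶ A') (g : B ⟶ B') (g' : B' ⟶ B''),
      imap (f' ≫ f) (g ≫ g') = imap f g ≫ imap f' g'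
  unit : V
  i : ∀ A : V, ihom unit A ⟶ A
  i_natural : ∀ {A B : V} (f : A ⟶ B), imap (𝟙 unit) f ≫ i B = i A ≫ f
  j : ∀ A : V, unit ⟶ ihom A A
  j_natural : ∀ {A B : V} (f : A ⟶ B), j A ≫ imap (𝟙 A) f = j B ≫ imap f (𝟙 B)
  L : ∀ A B C : V, ihom B C ⟶ ihom (ihom A B) (ihom A C)
  L_natural : ∀ {B B' C C' : V} (A : V) (f : B' ⟶ B) (g : C ⟶ C'),
      imap f g ≫ L A B' C' = L A B C ≫ imap (imap (𝟙 A) f) (imap (𝟙 A) g)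
  L_extranatural : ∀ {A A' : V} (h : A' ⟶ A) (B C : V),
      L A B C ≫ imap (𝟙 (ihom A B)) (imap h (𝟙 C))
        = L A' B C ≫ imap (imap h (𝟙 B)) (𝟙 (ihom A' C))
  SCC1 : ∀ A B C D : V,
      L A C D ≫ L (ihom A B) (ihom A C) (ihom A D) ≫
          imap (L A B C) (𝟙 (ihom (ihom A B) (ihom A D)))
        = L B C D ≫ imap (𝟙 (ihom B C)) (L A B D)
  SCC2 : ∀ A C : V, L A A C ≫ imap (j A) (𝟙 (ihom A C)) ≫ i (ihom A C) = 𝟙 (ihom A C)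
  SCC3 : ∀ A B : V, j B ≫ L A B B = j (ihom A B)
  SCC4 : ∀ B C : V, L unit B C ≫ imap (𝟙 (ihom unit B)) (i C) = imap (i B) (𝟙 C)
  SCC5 : j unit ≫ i unit = 𝟙 unit

section ConvTwo

open Opposite

variable {𝒱 : Type u} [Category.{u} 𝒱] (Vs : SkewClosedStruct 𝒱)

/-- Index data for the coend `(M∗N)C = ∫^B M[B,C] × NB`. -/
def Conv2Ix (M N : 𝒱 ⥤ Type u) (C : 𝒱) : Type u :=
  Σ B : 𝒱, M.obj (Vs.ihom B C) × N.obj B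

/-- The coend identifications for `(M∗N)C`. -/
def Conv2Rel (M N : 𝒱 ⥤ Type u) (C : 𝒱) :
    Conv2Ix Vs M N C → Conv2Ix Vs M N C → Prop := fun x y =>
  ∃ f : x.1 ⟶ y.1,
    x.2.1 = M.map (Vs.imap f (𝟙 C)) y.2.1 ∧ y.2.2 = N.map f x.2.2

/-- The convolution product `(M∗N)C = ∫^B M[B,C] × NB` on `[𝒱, Set]`. -/
def Conv2 (M N : 𝒱 ⥤ Type u) : 𝒱 ⥤ Type u where
  obj C := Quot (Conv2Rel Vs M N C)
  map {C C'} g := TypeCat.ofHom (Quot.map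
    (fun x => ⟨x.1, M.map (Vs.imap (𝟙 x.1) g) x.2.1, x.2.2⟩)
    (by rintro ⟨B, m, n⟩ ⟨B', m', n'⟩ ⟨f, e1, e2⟩
        dsimp only at e1 e2 ⊢
        refine ⟨f, ?_, e2⟩
        rw [e1, ← FunctorToTypes.map_comp_apply, ← FunctorToTypes.map_comp_apply,
          ← Vs.imap_comp, ← Vs.imap_comp]
        simp))
  map_id C := by
    ext q
    induction q using Quot.ind with
    | _ x =>
      obtain ⟨B, m, n⟩ := x
      exact congrArg (Quot.mk _) (by simp [Vs.imap_id]; rfl)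
  map_comp {C C' C''} g g' := by
    ext q
    induction q using Quot.ind with
    | _ x =>
      obtain ⟨B, m, n⟩ := x
      refine congrArg (Quot.mk _) ?_
      dsimp only
      rw [← FunctorToTypes.map_comp_apply, ← Vs.imap_comp]
      simp
      rfl
  
/-- Functoriality of the convolution product `∗` on `[𝒱, Set]` in both arguments. -/
def Conv2Map {M M' N N' : 𝒱 ⥤ Type u} (α : M ⟶ M') (β : N ⟶ N') :
    Conv2 Vs M N ⟶ Conv2 Vs M' N' where
  app C := TypeCat.ofHom (Quot.map
    (fun x => ⟨x.1, α.app (Vs.ihom x.1 C) x.2.1, β.app x.1 x.2.2⟩)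
    (by rintro ⟨B, m, n⟩ ⟨B', m', n'⟩ ⟨f, e1, e2⟩
        dsimp only at e1 e2 ⊢
        refine ⟨f, ?_, ?_⟩
        · rw [e1]; exact NatTrans.naturality_apply α (Vs.imap f (𝟙 C)) m'
        · rw [e2]; exact NatTrans.naturality_apply β f n))
  naturality {C C'} g := by
    ext q
    induction q using Quot.ind with
    | _ x =>
      obtain ⟨B, m, n⟩ := x
      exact congrArg (Quot.mk _) (by
        dsimp only
        rw [FunctorToTypes.naturality])

/-- The functor `M ∗ -`. -/
def Conv2Left (M : 𝒱 ⥤ Type u) : (𝒱 ⥤ Type u) ⥤ (𝒱 ⥤ Type u) where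
  obj N := Conv2 Vs M N
  map β := Conv2Map Vs (𝟙 M) β
  map_id N := by
    ext C q
    induction q using Quot.ind with
    | _ x => rfl
  map_comp β γ := by
    ext C q
    induction q using Quot.ind with
    | _ x => rfl

/-- The internal hom `[M,K]B = ∫_C [M[B,C], KC]` for the convolution structure on
`[𝒱, Set]`. -/
def Conv2Hom (M K : 𝒱 ⥤ Type u) : 𝒱 ⥤ Type u where
  obj B := { x : ∀ C : 𝒱, M.obj (Vs.ihom B C) → K.obj C //
      ∀ (C C' : 𝒱) (g : C ⟶ C') (m : M.obj (Vs.ihom B C)),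
        x C' (M.map (Vs.imap (𝟙 B) g) m) = K.map g (x C m) }
  map {B B'} f := TypeCat.ofHom fun x => ⟨fun C m => x.1 C (M.map (Vs.imap f (𝟙 C)) m), by
    intro C C' g m
    dsimp only
    rw [← FunctorToTypes.map_comp_apply, ← Vs.imap_comp, ← x.2 C C' g,
      ← FunctorToTypes.map_comp_apply, ← Vs.imap_comp]
    simp⟩
  map_id B := by
    ext x C m
    simp [Vs.imap_id]
  map_comp {B B' B''} f f' := by
    ext x C m
    show x.1 C (M.map (Vs.imap (f ≫ f') (𝟙 C)) m)
        = x.1 C (M.map (Vs.imap f (𝟙 C)) (M.map (Vs.imap f' (𝟙 C)) m))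
    rw [← FunctorToTypes.map_comp_apply, ← Vs.imap_comp]
    simp

/-- The unit `J` of the convolution structure on `[𝒱, Set]`: `JC = 𝒱(I,C)`. -/
def Conv2J : 𝒱 ⥤ Type u := coyoneda.obj (op Vs.unit)

/-! ### Auxiliary constructions for the proof -/

lemma conv2_mk_eq {M N : 𝒱 ⥤ Type u} {C : 𝒱} {B B' : 𝒱} (f : B ⟶ B')
    {m : M.obj (Vs.ihom B C)} {m' : M.obj (Vs.ihom B' C)} {n : N.obj B} {n' : N.obj B'}
    (h1 : m = M.map (Vs.imap f (𝟙 C)) m') (h2 : n' = N.map f n) :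
    (Quot.mk (Conv2Rel Vs M N C) ⟨B, m, n⟩) = Quot.mk _ ⟨B', m', n'⟩ :=
  Quot.sound ⟨f, h1, h2⟩

lemma quotmk_congr {M N : 𝒱 ⥤ Type u} {C : 𝒱} (B : 𝒱)
    {m m' : M.obj (Vs.ihom B C)} {n n' : N.obj B} (h1 : m = m') (h2 : n = n') :
    (Quot.mk (Conv2Rel Vs M N C) ⟨B, m, n⟩) = Quot.mk _ ⟨B, m', n'⟩ := by
  subst h1 h2; rfl

lemma conv2_map_mk {M N : 𝒱 ⥤ Type u} {C C' : 𝒱} (g : C ⟶ C') (x : Conv2Ix Vs M N C) :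
    (Conv2 Vs M N).map g (Quot.mk _ x) =
      Quot.mk _ ⟨x.1, M.map (Vs.imap (𝟙 x.1) g) x.2.1, x.2.2⟩ := rfl

/-- Inner part of the associativity map. -/
def AuxAInner (M N K : 𝒱 ⥤ Type u) (C B : 𝒱) (m : M.obj (Vs.ihom B C)) :
    (Conv2 Vs N K).obj B → (Conv2 Vs (Conv2 Vs M N) K).obj C :=
  Quot.lift
    (fun y => Quot.mk _
      ⟨y.1, Quot.mk _ ⟨Vs.ihom y.1 B, M.map (Vs.L y.1 B C) m, y.2.1⟩, y.2.2⟩)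
    (by
      rintro ⟨E, n, k⟩ ⟨E', n', k'⟩ ⟨f, e1, e2⟩
      dsimp only at e1 e2 ⊢
      refine Quot.sound ⟨f, ?_, e2⟩
      refine Eq.trans ?_ (conv2_map_mk Vs _ _).symm
      refine Eq.symm (conv2_mk_eq Vs (Vs.imap f (𝟙 B))
        (m' := M.map (Vs.L E B C) m) (n' := n) ?_ e1)
      dsimp only
      rw [← FunctorToTypes.map_comp_apply, ← FunctorToTypes.map_comp_apply,
        Vs.L_extranatural f])

/-- The associativity constraint `a : M∗(N∗K) ⟶ (M∗N)∗K`. -/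
def AuxA (M N K : 𝒱 ⥤ Type u) :
    Conv2 Vs M (Conv2 Vs N K) ⟶ Conv2 Vs (Conv2 Vs M N) K where
  app C := TypeCat.ofHom (Quot.lift (fun x => AuxAInner Vs M N K C x.1 x.2.1 x.2.2)
    (by
      rintro ⟨B, m, q⟩ ⟨B', m', q'⟩ ⟨h, e1, e2⟩
      dsimp only at e1 e2 ⊢
      rw [e1, e2]
      induction q using Quot.ind with
      | _ y =>
        obtain ⟨E, n, k⟩ := y
        refine quotmk_congr Vs E ?_ rfl
        refine conv2_mk_eq Vs (Vs.imap (𝟙 E) h) ?_ rfl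
        dsimp only
        rw [← FunctorToTypes.map_comp_apply, ← FunctorToTypes.map_comp_apply,
          Vs.L_natural E h (𝟙 C), Vs.imap_id]))
  naturality {C C'} g := by
    ext q
    induction q using Quot.ind with
    | _ x =>
      obtain ⟨B, m, q⟩ := x
      induction q using Quot.ind with
      | _ y =>
        obtain ⟨E, n, k⟩ := y
        show (Quot.mk _ ⟨E, Quot.mk _ ⟨Vs.ihom E B,
            M.map (Vs.L E B C') (M.map (Vs.imap (𝟙 B) g) m), n⟩, k⟩ :
              (Conv2 Vs (Conv2 Vs M N) K).obj C')
          = Quot.mk _ ⟨E, (Conv2 Vs M N).map (Vs.imap (𝟙 E) g)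
              (Quot.mk _ ⟨Vs.ihom E B, M.map (Vs.L E B C) m, n⟩), k⟩
        refine Eq.trans ?_ (congrArg (fun t => (Quot.mk (Conv2Rel Vs (Conv2 Vs M N) K C')
          ⟨E, t, k⟩)) (conv2_map_mk Vs _ _)).symm
        refine quotmk_congr Vs E ?_ rfl
        refine quotmk_congr Vs (Vs.ihom E B) ?_ rfl
        dsimp only
        rw [← FunctorToTypes.map_comp_apply, ← FunctorToTypes.map_comp_apply,
          Vs.L_natural E (𝟙 B) g, Vs.imap_id]

/-- The left unit constraint `ℓ : M ⟶ J∗M`. -/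
def AuxL (M : 𝒱 ⥤ Type u) : M ⟶ Conv2 Vs (Conv2J Vs) M where
  app C := TypeCat.ofHom fun m => Quot.mk _ ⟨C, Vs.j C, m⟩
  naturality {C C'} g := by
    ext m
    refine Eq.symm ?_
    show (Conv2 Vs (Conv2J Vs) M).map g (Quot.mk _ ⟨C, Vs.j C, m⟩)
      = Quot.mk _ ⟨C', Vs.j C', M.map g m⟩
    refine Eq.trans (conv2_map_mk Vs _ _) ?_
    refine conv2_mk_eq Vs g ?_ rfl
    exact Vs.j_natural g

/-- The right unit constraint `r : M∗J ⟶ M`. -/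
def AuxR (M : 𝒱 ⥤ Type u) : Conv2 Vs M (Conv2J Vs) ⟶ M where
  app C := TypeCat.ofHom (Quot.lift (fun x => M.map (Vs.i C) (M.map (Vs.imap x.2.2 (𝟙 C)) x.2.1))
    (by
      rintro ⟨B, m, b⟩ ⟨B', m', b'⟩ ⟨f, e1, e2⟩
      dsimp only at e1 e2 ⊢
      change Vs.unit ⟶ B at b
      have e2' : b' = b ≫ f := e2
      rw [e1, e2', ← FunctorToTypes.map_comp_apply, ← FunctorToTypes.map_comp_apply,
        ← FunctorToTypes.map_comp_apply, ← Category.assoc, ← Vs.imap_comp]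
      simp))
  naturality {C C'} g := by
    ext q
    induction q using Quot.ind with
    | _ x =>
      obtain ⟨B, m, b⟩ := x
      change Vs.unit ⟶ B at b
      show M.map (Vs.i C') (M.map (Vs.imap b (𝟙 C')) (M.map (Vs.imap (𝟙 B) g) m))
        = M.map g (M.map (Vs.i C) (M.map (Vs.imap b (𝟙 C)) m))
      rw [← FunctorToTypes.map_comp_apply, ← FunctorToTypes.map_comp_apply,
        ← FunctorToTypes.map_comp_apply, ← FunctorToTypes.map_comp_apply]
      have : Vs.imap (𝟙 B) g ≫ Vs.imap b (𝟙 C') ≫ Vs.i C'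
          = Vs.imap b (𝟙 C) ≫ Vs.i C ≫ g := by
        rw [← Category.assoc, ← Vs.imap_comp, ← Vs.i_natural g,
          ← Category.assoc, ← Vs.imap_comp]
        simp
      rw [this]

/-- The internal-hom functor `K ↦ [M,K]`. -/
def AuxHomF (M : 𝒱 ⥤ Type u) : (𝒱 ⥤ Type u) ⥤ (𝒱 ⥤ Type u) where
  obj K := Conv2Hom Vs M K
  map {K K'} γ :=
    { app := fun B => TypeCat.ofHom fun x => ⟨fun C m => γ.app C (x.1 C m), by
        intro C C' g m
        dsimp only
        rw [x.2 C C' g m, FunctorToTypes.naturality]⟩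
      naturality := by
        intro B B' f
        ext x
        exact Subtype.ext rfl }
  map_id K := by
    ext B x
    exact Subtype.ext rfl
  map_comp γ γ' := by
    ext B x
    exact Subtype.ext rfl

/-- The adjunction `M ∗ - ⊣ [M,-]`. -/
def AuxAdj (M : 𝒱 ⥤ Type u) : Conv2Left Vs M ⊣ AuxHomF Vs M :=
  Adjunction.mkOfHomEquiv
    { homEquiv := fun N K =>
        { toFun := fun φ =>
            { app := fun B => TypeCat.ofHom fun n => ⟨fun C m => φ.app C (Quot.mk _ ⟨B, m, n⟩), by
                intro C C' g m
                exact FunctorToTypes.naturality φ g (Quot.mk _ ⟨B, m, n⟩)⟩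
              naturality := by
                intro B B' f
                ext n
                refine Subtype.ext ?_
                funext C m
                exact congrArg (φ.app C) (conv2_mk_eq Vs f rfl rfl).symm }
          invFun := fun ψ =>
            { app := fun C => TypeCat.ofHom (Quot.lift (fun x => (ψ.app x.1 x.2.2).1 C x.2.1)
                (by
                  rintro ⟨B, m, n⟩ ⟨B', m', n'⟩ ⟨f, e1, e2⟩
                  dsimp only at e1 e2 ⊢
                  rw [e1, e2]
                  have hnat : ψ.app B' (N.map f n)
                      = ((AuxHomF Vs M).obj K).map f (ψ.app B n) :=
                    NatTrans.naturality_apply ψ f n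
                  rw [hnat]
                  rfl))
              naturality := by
                intro C C' g
                ext q
                induction q using Quot.ind with
                | _ x =>
                  obtain ⟨B, m, n⟩ := x
                  exact (ψ.app B n).2 C C' g m }
          left_inv := fun φ => by
            ext C q
            induction q using Quot.ind with
            | _ x => rfl
          right_inv := fun ψ => by
            ext B n
            exact Subtype.ext rfl }
      homEquiv_naturality_left_symm := by
        intro N' N K f g
        ext C q
        induction q using Quot.ind with
        | _ x => rfl
      homEquiv_naturality_right := by
        intro N K K' f g
        ext B n
        exact Subtype.ext rfl }

/-- (Street, "Skew-closed categories", §10, second example.)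
For a small left skew-closed category `𝒱`, the convolution product
`(M∗N)C = ∫^B M[B,C] × NB` with unit `J = 𝒱(I,-)`, left unit `ℓ_M : m ↦ [(j_C, m)]`,
right unit `r_M` given by the co-Yoneda isomorphism followed by `M(i_C)`, and
associativity induced by `(m,n,k) ↦ (M(L^E_{B,C})m, n, k)`, is a **right**
skew-monoidal structure on `[𝒱, Set]`, and it is closed: each `M∗-` has a right
adjoint `[M,-]` with `[M,K]B = ∫_C [M[B,C], KC]`. -/
theorem convolution_of_skew_closed_right_skew_monoidal :
    ∃ (a : ∀ M N K : 𝒱 ⥤ Type u,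
        Conv2 Vs M (Conv2 Vs N K) ⟶ Conv2 Vs (Conv2 Vs M N) K)
      (l : ∀ M : 𝒱 ⥤ Type u, M ⟶ Conv2 Vs (Conv2J Vs) M)
      (r : ∀ M : 𝒱 ⥤ Type u, Conv2 Vs M (Conv2J Vs) ⟶ M),
      -- the constraints are given by the formulas in the statement:
      (∀ (M N K : 𝒱 ⥤ Type u) (C B E : 𝒱) (m : M.obj (Vs.ihom B C))
          (n : N.obj (Vs.ihom E B)) (k : K.obj E),
        (a M N K).app C (Quot.mk _ ⟨B, m, Quot.mk _ ⟨E, n, k⟩⟩)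
          = Quot.mk _ ⟨E, Quot.mk _ ⟨Vs.ihom E B, M.map (Vs.L E B C) m, n⟩, k⟩) ∧
      (∀ (M : 𝒱 ⥤ Type u) (C : 𝒱) (m : M.obj C),
        (l M).app C m = Quot.mk _ ⟨C, Vs.j C, m⟩) ∧
      (∀ (M : 𝒱 ⥤ Type u) (C B : 𝒱) (m : M.obj (Vs.ihom B C)) (b : Vs.unit ⟶ B),
        (r M).app C (Quot.mk _ ⟨B, m, b⟩)
          = M.map (Vs.i C) (M.map (Vs.imap b (𝟙 C)) m)) ∧
      -- they are natural:
      (∀ (M M' N N' K K' : 𝒱 ⥤ Type u) (α : M ⟶ M') (β : N ⟶ N') (γ : K ⟶ K'),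
        Conv2Map Vs α (Conv2Map Vs β γ) ≫ a M' N' K'
          = a M N K ≫ Conv2Map Vs (Conv2Map Vs α β) γ) ∧
      (∀ (M M' : 𝒱 ⥤ Type u) (α : M ⟶ M'),
        α ≫ l M' = l M ≫ Conv2Map Vs (𝟙 (Conv2J Vs)) α) ∧
      (∀ (M M' : 𝒱 ⥤ Type u) (α : M ⟶ M'),
        Conv2Map Vs α (𝟙 (Conv2J Vs)) ≫ r M' = r M ≫ α) ∧
      -- the five right skew-monoidal axioms:
      (∀ M N K L' : 𝒱 ⥤ Type u,
        a M N (Conv2 Vs K L') ≫ a (Conv2 Vs M N) K L'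
          = Conv2Map Vs (𝟙 M) (a N K L') ≫ a M (Conv2 Vs N K) L' ≫
              Conv2Map Vs (a M N K) (𝟙 L')) ∧
      (∀ M N : 𝒱 ⥤ Type u,
        Conv2Map Vs (𝟙 M) (l N) ≫ a M (Conv2J Vs) N ≫ Conv2Map Vs (r M) (𝟙 N)
          = 𝟙 (Conv2 Vs M N)) ∧
      (∀ M N : 𝒱 ⥤ Type u,
        l (Conv2 Vs M N) ≫ a (Conv2J Vs) M N = Conv2Map Vs (l M) (𝟙 N)) ∧
      (∀ M N : 𝒱 ⥤ Type u,
        a M N (Conv2J Vs) ≫ r (Conv2 Vs M N) = Conv2Map Vs (𝟙 M) (r N)) ∧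
      (l (Conv2J Vs) ≫ r (Conv2J Vs) = 𝟙 (Conv2J Vs)) ∧
      -- and the structure is closed, with internal hom the end `[M,K]B = ∫_C [M[B,C],KC]`:
      (∀ M : 𝒱 ⥤ Type u, ∃ G : (𝒱 ⥤ Type u) ⥤ (𝒱 ⥤ Type u),
        (∀ K : 𝒱 ⥤ Type u, G.obj K = Conv2Hom Vs M K) ∧
        Nonempty (Conv2Left Vs M ⊣ G)) := by
  refine ⟨AuxA Vs, AuxL Vs, AuxR Vs,
    fun M N K C B E m n k => rfl, fun M C m => rfl, fun M C B m b => rfl,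
    ?_, ?_, ?_, ?_, ?_, ?_, ?_, ?_,
    fun M => ⟨AuxHomF Vs M, fun K => rfl, ⟨AuxAdj Vs M⟩⟩⟩
  · -- naturality of a
    intro M M' N N' K K' α β γ
    ext C q
    induction q using Quot.ind with
    | _ x =>
      obtain ⟨B, m, q⟩ := x
      induction q using Quot.ind with
      | _ y =>
        obtain ⟨E, n, k⟩ := y
        show (Quot.mk _ ⟨E, Quot.mk _ ⟨Vs.ihom E B,
              M'.map (Vs.L E B C) (α.app (Vs.ihom B C) m),
              β.app (Vs.ihom E B) n⟩, γ.app E k⟩ :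
                (Conv2 Vs (Conv2 Vs M' N') K').obj C)
          = Quot.mk _ ⟨E, Quot.mk _ ⟨Vs.ihom E B,
              α.app (Vs.ihom (Vs.ihom E B) (Vs.ihom E C)) (M.map (Vs.L E B C) m),
              β.app (Vs.ihom E B) n⟩, γ.app E k⟩
        refine quotmk_congr Vs E ?_ rfl
        refine quotmk_congr Vs (Vs.ihom E B) ?_ rfl
        exact (FunctorToTypes.naturality α (Vs.L E B C) m).symm
  · -- naturality of l
    intro M M' α
    ext C m
    rfl
  · -- naturality of r
    intro M M' α
    ext C q
    induction q using Quot.ind with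
    | _ x =>
      obtain ⟨B, m, b⟩ := x
      show M'.map (Vs.i C) (M'.map (Vs.imap b (𝟙 C)) (α.app (Vs.ihom B C) m))
        = α.app C (M.map (Vs.i C) (M.map (Vs.imap b (𝟙 C)) m))
      rw [FunctorToTypes.naturality α (Vs.i C),
        FunctorToTypes.naturality α (Vs.imap b (𝟙 C))]
  · -- pentagon
    intro M N K L'
    ext C q
    induction q using Quot.ind with
    | _ x =>
      obtain ⟨B, m, q⟩ := x
      induction q using Quot.ind with
      | _ y =>
        obtain ⟨E, n, q'⟩ := y
        induction q' using Quot.ind with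
        | _ z =>
          obtain ⟨F, p, l⟩ := z
          show (Quot.mk _ ⟨F, Quot.mk _ ⟨Vs.ihom F E, Quot.mk _ ⟨Vs.ihom E B,
              M.map (Vs.imap (𝟙 (Vs.ihom E B)) (Vs.L F E C)) (M.map (Vs.L E B C) m),
              n⟩, p⟩, l⟩ : (Conv2 Vs (Conv2 Vs (Conv2 Vs M N) K) L').obj C)
            = Quot.mk _ ⟨F, Quot.mk _ ⟨Vs.ihom F E, Quot.mk _
                ⟨Vs.ihom (Vs.ihom F E) (Vs.ihom F B),
                M.map (Vs.L (Vs.ihom F E) (Vs.ihom F B) (Vs.ihom F C))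
                  (M.map (Vs.L F B C) m),
                N.map (Vs.L F E B) n⟩, p⟩, l⟩
          refine quotmk_congr Vs F ?_ rfl
          refine quotmk_congr Vs (Vs.ihom F E) ?_ rfl
          refine conv2_mk_eq Vs (Vs.L F E B) ?_ rfl
          rw [← FunctorToTypes.map_comp_apply, ← FunctorToTypes.map_comp_apply,
            ← FunctorToTypes.map_comp_apply, ← Vs.SCC1 F E B C]
  · -- left-right unit axiom
    intro M N
    ext C q
    induction q using Quot.ind with
    | _ x =>
      obtain ⟨B, m, n⟩ := x
      show (Quot.mk _ ⟨B, M.map (Vs.i (Vs.ihom B C))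
            (M.map (Vs.imap (Vs.j B) (𝟙 (Vs.ihom B C))) (M.map (Vs.L B B C) m)), n⟩ :
              (Conv2 Vs M N).obj C)
        = Quot.mk _ ⟨B, m, n⟩
      refine quotmk_congr Vs B ?_ rfl
      rw [← FunctorToTypes.map_comp_apply, ← FunctorToTypes.map_comp_apply,
        Vs.SCC2 B C, FunctorToTypes.map_id_apply]
  · -- left unit vs associativity
    intro M N
    ext C q
    induction q using Quot.ind with
    | _ x =>
      obtain ⟨B, m, n⟩ := x
      show (Quot.mk _ ⟨B, Quot.mk _ ⟨Vs.ihom B C,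
            (Conv2J Vs).map (Vs.L B C C) (Vs.j C), m⟩, n⟩ :
              (Conv2 Vs (Conv2 Vs (Conv2J Vs) M) N).obj C)
        = Quot.mk _ ⟨B, Quot.mk _ ⟨Vs.ihom B C, Vs.j (Vs.ihom B C), m⟩, n⟩
      refine quotmk_congr Vs B ?_ rfl
      refine quotmk_congr Vs (Vs.ihom B C) ?_ rfl
      exact Vs.SCC3 B C
  · -- right unit vs associativity
    intro M N
    ext C q
    induction q using Quot.ind with
    | _ x =>
      obtain ⟨B, m, q⟩ := x
      induction q using Quot.ind with
      | _ y =>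
        obtain ⟨E, n, b⟩ := y
        change Vs.unit ⟶ E at b
        show (Quot.mk _ ⟨Vs.ihom E B,
              M.map (Vs.imap (𝟙 (Vs.ihom E B)) (Vs.i C))
                (M.map (Vs.imap (𝟙 (Vs.ihom E B)) (Vs.imap b (𝟙 C)))
                  (M.map (Vs.L E B C) m)), n⟩ : (Conv2 Vs M N).obj C)
          = Quot.mk _ ⟨B, m, N.map (Vs.i B) (N.map (Vs.imap b (𝟙 B)) n)⟩
        refine conv2_mk_eq Vs (Vs.imap b (𝟙 B) ≫ Vs.i B) ?_
          (FunctorToTypes.map_comp_apply N _ _ n).symm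
        have key : Vs.L E B C ≫ Vs.imap (𝟙 (Vs.ihom E B)) (Vs.imap b (𝟙 C)) ≫
              Vs.imap (𝟙 (Vs.ihom E B)) (Vs.i C)
            = Vs.imap (Vs.imap b (𝟙 B) ≫ Vs.i B) (𝟙 C) := by
          rw [← Category.assoc, Vs.L_extranatural b B C, Category.assoc]
          have s1 : Vs.imap (Vs.imap b (𝟙 B)) (𝟙 (Vs.ihom Vs.unit C)) ≫
                Vs.imap (𝟙 (Vs.ihom E B)) (Vs.i C)
              = Vs.imap (𝟙 (Vs.ihom Vs.unit B)) (Vs.i C) ≫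
                Vs.imap (Vs.imap b (𝟙 B)) (𝟙 C) := by
            rw [← Vs.imap_comp, ← Vs.imap_comp]
            simp
          rw [s1, ← Category.assoc, Vs.SCC4, ← Vs.imap_comp]
          simp
        rw [← FunctorToTypes.map_comp_apply, ← FunctorToTypes.map_comp_apply, key]
  · -- unit axiom
    ext C c
    change Vs.unit ⟶ C at c
    show ((Vs.j C ≫ Vs.imap c (𝟙 C)) ≫ Vs.i C : Vs.unit ⟶ C) = c
    rw [← Vs.j_natural c, Category.assoc, Vs.i_natural c, ← Category.assoc, Vs.SCC5,
      Category.id_comp]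

end ConvTwo
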